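/- Let φ be an AND-OR formula with maximum fan-in l and ∧-depth d_∧ (the largest number of ∧-nodes on any root-to-leaf path). Then the longest self-avoiding path connecting s and t in the series-parallel graph G_φ has length at most l^{d_∧}. -/

import Mathlib

open scoped ENNReal

namespace STConn

variable {V E : Type*}

/-- `v` is an endpoint of edge `e`. -/
def Touches (ends : E → V × V) (e : E) (v : V) : Prop :=
  (ends e).1 = v ∨ (ends e).2 = v

/-- Net flow out of vertex `v` for an edge-valued function `θ` (value along the
fixed orientation of each edge). -/
noncomputable def netflow [Fintype E] [DecidableEq V] (ends : E → V × V) (θ : E → ℝ) (v : V) : ℝ :=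
  ∑ e, θ e * ((if (ends e).1 = v then (1:ℝ) else 0) - (if (ends e).2 = v then 1 else 0))

/-- `θ` is a unit `st`-flow: net flow `+1` at `s`, `-1` at `t`, `0` elsewhere. -/
def IsUnitFlow [Fintype E] [DecidableEq V] (ends : E → V × V) (s t : V) (θ : E → ℝ) : Prop :=
  ∀ v, netflow ends θ v = (if v = s then (1:ℝ) else 0) - (if v = t then 1 else 0)

/-- Energy of a flow with respect to edge weights `c`. -/
noncomputable def energy [Fintype E] (c : E → ℝ) (θ : E → ℝ) : ℝ :=
  ∑ e, θ e ^ 2 / c e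

/-- Effective resistance between `s` and `t`, restricted to flows supported on `S`
(taking value `∞` if no unit `st`-flow supported on `S` exists). -/
noncomputable def effResOn [Fintype E] [DecidableEq V] (ends : E → V × V) (c : E → ℝ)
    (S : Set E) (s t : V) : ℝ≥0∞ :=
  ⨅ θ : {θ : E → ℝ // IsUnitFlow ends s t θ ∧ ∀ e ∉ S, θ e = 0},
    ENNReal.ofReal (energy c θ.1)

/-- Effective resistance between `s` and `t` in the network `(ends, c)`. -/
noncomputable def effRes [Fintype E] [DecidableEq V] (ends : E → V × V) (c : E → ℝ)
    (s t : V) : ℝ≥0∞ :=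
  effResOn ends c Set.univ s t

end STConn

namespace STConn

/-- Read-once AND-OR formulas on `N` variables (gates have fan-in `k+1`). -/
inductive Formula (N : ℕ) : Type where
  | var : Fin N → Formula N
  | and : (k : ℕ) → (Fin (k + 1) → Formula N) → Formula N
  | or : (k : ℕ) → (Fin (k + 1) → Formula N) → Formula N

namespace Formula

variable {N : ℕ}

/-- Evaluation of a formula on an input. -/
def eval : Formula N → (Fin N → Bool) → Bool
  | .var i, x => x i
  | .and _ fs, x => (List.finRange _).all fun i => (fs i).eval x
  | .or _ fs, x => (List.finRange _).any fun i => (fs i).eval x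

/-- The leaves of a formula; these index the edges of the graph `G_φ`. -/
def Leaves : Formula N → Type
  | .var _ => Unit
  | .and k fs => Σ i : Fin (k + 1), (fs i).Leaves
  | .or k fs => Σ i : Fin (k + 1), (fs i).Leaves

/-- The variable labelling a leaf. -/
def label : (φ : Formula N) → φ.Leaves → Fin N
  | .var i, _ => i
  | .and _ fs, ⟨i, l⟩ => (fs i).label l
  | .or _ fs, ⟨i, l⟩ => (fs i).label l

/-- The internal (non-terminal) vertices of the series-parallel graph `G_φ`:
series composition (for `∧`) introduces `k` junction vertices. -/
def Inner : Formula N → Type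
  | .var _ => Empty
  | .and k fs => (Σ i : Fin (k + 1), (fs i).Inner) ⊕ Fin k
  | .or k fs => Σ i : Fin (k + 1), (fs i).Inner

/-- The vertex set of `G_φ`: internal vertices plus the two terminals
(`Sum.inr true = s`, `Sum.inr false = t`). -/
abbrev Vert (φ : Formula N) : Type := φ.Inner ⊕ Bool

/-- Embedding the vertices of the `i`-th subgraph into a series composition. -/
def vmapAnd (k : ℕ) (fs : Fin (k + 1) → Formula N) (i : Fin (k + 1)) :
    (fs i).Vert → (Formula.and k fs).Vert
  | .inl w => .inl (.inl ⟨i, w⟩)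
  | .inr true =>
      if h : i.val = 0 then .inr true
      else .inl (.inr ⟨i.val - 1, by have := i.isLt; omega⟩)
  | .inr false =>
      if h : i.val = k then .inr false
      else .inl (.inr ⟨i.val, by have := i.isLt; omega⟩)

/-- Embedding the vertices of the `i`-th subgraph into a parallel composition. -/
def vmapOr (k : ℕ) (fs : Fin (k + 1) → Formula N) (i : Fin (k + 1)) :
    (fs i).Vert → (Formula.or k fs).Vert
  | .inl w => .inl ⟨i, w⟩
  | .inr b => .inr b

/-- The endpoints of each edge (= leaf) of the series-parallel graph `G_φ`:
a variable is a single `st`-edge, `∧` composes the subgraphs in series, and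
`∨` composes them in parallel. -/
def ends : (φ : Formula N) → φ.Leaves → φ.Vert × φ.Vert
  | .var _, _ => (.inr true, .inr false)
  | .and k fs, ⟨i, l⟩ =>
      (vmapAnd k fs i ((fs i).ends l).1, vmapAnd k fs i ((fs i).ends l).2)
  | .or k fs, ⟨i, l⟩ =>
      (vmapOr k fs i ((fs i).ends l).1, vmapOr k fs i ((fs i).ends l).2)

/-- The dual formula: swap every `∧` with `∨`. -/
def dualF : Formula N → Formula N
  | .var i => .var i
  | .and k fs => .or k fun i => dualF (fs i)
  | .or k fs => .and k fun i => dualF (fs i)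

def leavesFintype : (φ : Formula N) → Fintype φ.Leaves
  | .var _ => inferInstanceAs (Fintype Unit)
  | .and k fs =>
      letI := fun i => leavesFintype (fs i)
      inferInstanceAs (Fintype (Σ i : Fin (k + 1), (fs i).Leaves))
  | .or k fs =>
      letI := fun i => leavesFintype (fs i)
      inferInstanceAs (Fintype (Σ i : Fin (k + 1), (fs i).Leaves))

instance (φ : Formula N) : Fintype φ.Leaves := leavesFintype φ

def innerDecEq : (φ : Formula N) → DecidableEq φ.Inner
  | .var _ => fun a => a.elim
  | .and k fs =>
      letI := fun i => innerDecEq (fs i)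
      inferInstanceAs (DecidableEq ((Σ i : Fin (k + 1), (fs i).Inner) ⊕ Fin k))
  | .or k fs =>
      letI := fun i => innerDecEq (fs i)
      inferInstanceAs (DecidableEq (Σ i : Fin (k + 1), (fs i).Inner))

instance (φ : Formula N) : DecidableEq φ.Inner := innerDecEq φ

instance (φ : Formula N) : DecidableEq φ.Vert :=
  inferInstanceAs (DecidableEq (φ.Inner ⊕ Bool))

/-- The source terminal `s` of `G_φ`. -/
def src (φ : Formula N) : φ.Vert := .inr true

/-- The sink terminal `t` of `G_φ`. -/
def snk (φ : Formula N) : φ.Vert := .inr false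

end Formula
end STConn
namespace STConn
namespace Formula

variable {N : ℕ}

/-- The `∧`-depth: the largest number of `∧`-nodes on a root-to-leaf path. -/
def andDepth : Formula N → ℕ
  | .var _ => 0
  | .and _ fs => (Finset.univ.sup fun i => (fs i).andDepth) + 1
  | .or _ fs => Finset.univ.sup fun i => (fs i).andDepth

/-- The `∨`-depth: the largest number of `∨`-nodes on a root-to-leaf path. -/
def orDepth : Formula N → ℕ
  | .var _ => 0
  | .and _ fs => Finset.univ.sup fun i => (fs i).orDepth
  | .or _ fs => (Finset.univ.sup fun i => (fs i).orDepth) + 1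

/-- Every gate of the formula has fan-in at most `l`. -/
def FanInLe (l : ℕ) : Formula N → Prop
  | .var _ => True
  | .and k fs => k + 1 ≤ l ∧ ∀ i, FanInLe l (fs i)
  | .or k fs => k + 1 ≤ l ∧ ∀ i, FanInLe l (fs i)

end Formula
end STConn

namespace STConn
namespace Formula

variable {N : ℕ}

lemma vmapAnd_injective (k : ℕ) (fs : Fin (k + 1) → Formula N) (i : Fin (k + 1)) :
    Function.Injective (vmapAnd k fs i) := by
  intro x y h
  rcases x with w | (_ | _) <;> rcases y with w' | (_ | _) <;>
      simp only [vmapAnd] at h <;>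
      try split_ifs at h
  all_goals
    first
      | rfl
      | (injection h; done)
      | (injection h with h1; exact Bool.noConfusion h1)
      | (injection h with h1; injection h1; done)
      | (injection h with h1; injection h1 with h2; injection h2 with h3; omega)
      | (injection h with h1; injection h1 with h2
         obtain ⟨-, h3⟩ := Sigma.mk.inj_iff.mp h2
         rw [eq_of_heq h3])

lemma vmapOr_injective (k : ℕ) (fs : Fin (k + 1) → Formula N) (i : Fin (k + 1)) :
    Function.Injective (vmapOr k fs i) := by
  intro x y h
  rcases x with w | b <;> rcases y with w' | b' <;> simp only [vmapOr] at h
  all_goals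
    first
      | (injection h; done)
      | (injection h with h1; rw [h1])
      | (injection h with h1
         obtain ⟨-, h3⟩ := Sigma.mk.inj_iff.mp h1
         rw [eq_of_heq h3])

lemma vmapAnd_sep (k : ℕ) (fs : Fin (k + 1) → Formula N) (i : Fin (k + 1))
    (v : (fs i).Vert) (i' : Fin (k + 1)) (w' : (fs i').Inner)
    (h : vmapAnd k fs i' (Sum.inl w') = vmapAnd k fs i v) :
    i = i' ∧ ∃ w, v = Sum.inl w := by
  rcases v with w | b
  · refine ⟨?_, w, rfl⟩
    simp only [vmapAnd] at h
    injection h with h1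
    injection h1 with h2
    exact (Sigma.mk.inj_iff.mp h2).1.symm
  · exfalso
    rcases b with _ | _ <;> simp only [vmapAnd] at h <;> split_ifs at h <;>
      first
        | (injection h; done)
        | (injection h with h1; injection h1; done)

lemma vmapOr_sep (k : ℕ) (fs : Fin (k + 1) → Formula N) (i : Fin (k + 1))
    (v : (fs i).Vert) (i' : Fin (k + 1)) (w' : (fs i').Inner)
    (h : vmapOr k fs i' (Sum.inl w') = vmapOr k fs i v) :
    i = i' ∧ ∃ w, v = Sum.inl w := by
  rcases v with w | b
  · refine ⟨?_, w, rfl⟩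
    simp only [vmapOr] at h
    injection h with h1
    exact (Sigma.mk.inj_iff.mp h1).1.symm
  · exfalso
    simp only [vmapOr] at h
    injection h

/-- Master lemma: in a graph obtained by gluing the branch graphs `G_{fs i}`
along terminal images, any self-avoiding path between terminal-image vertices
has length at most `(K-1) * M`, where `K` bounds the number of terminal-image
vertices and `M` bounds the longest terminal-to-terminal path in a branch. -/
lemma master {l : ℕ} {φ : Formula N} {k : ℕ} {fs : Fin (k + 1) → Formula N}
    (vmap : ∀ i, (fs i).Vert → φ.Vert)
    (hvinj : ∀ i, Function.Injective (vmap i))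
    (hsep : ∀ (i : Fin (k + 1)) (v : (fs i).Vert) (i' : Fin (k + 1)) (w' : (fs i').Inner),
        vmap i' (Sum.inl w') = vmap i v → i = i' ∧ ∃ w, v = Sum.inl w)
    (hE : ∀ e : φ.Leaves, ∃ (i : Fin (k + 1)) (e' : (fs i).Leaves),
        φ.ends e = (vmap i ((fs i).ends e').1, vmap i ((fs i).ends e').2))
    (K M : ℕ)
    (hM : ∀ i, l ^ (fs i).andDepth ≤ M)
    (hcard : ∀ T : Finset φ.Vert, (∀ x ∈ T, ∃ i b, x = vmap i (Sum.inr b)) → T.card ≤ K)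
    (IH : ∀ (i : Fin (k + 1)) (m : ℕ) (xs : ℕ → (fs i).Vert), Set.InjOn xs (Set.Iic m) →
        ((xs 0 = Sum.inr true ∧ xs m = Sum.inr false) ∨
         (xs 0 = Sum.inr false ∧ xs m = Sum.inr true)) →
        (∀ j < m, ∃ e, (fs i).ends e = (xs j, xs (j + 1)) ∨
          (fs i).ends e = (xs (j + 1), xs j)) →
        m ≤ l ^ (fs i).andDepth)
    (n : ℕ) (vs : ℕ → φ.Vert) (hvs : Set.InjOn vs (Set.Iic n))
    (h0 : ∃ i b, vs 0 = vmap i (Sum.inr b)) (hn : ∃ i b, vs n = vmap i (Sum.inr b))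
    (hadj : ∀ j < n, ∃ e : φ.Leaves,
      φ.ends e = (vs j, vs (j + 1)) ∨ φ.ends e = (vs (j + 1), vs j)) :
    n ≤ (K - 1) * M := by
  classical
  have hadj' : ∀ j < n, ∃ (i : Fin (k + 1)) (e' : (fs i).Leaves),
      (vmap i ((fs i).ends e').1 = vs j ∧ vmap i ((fs i).ends e').2 = vs (j + 1)) ∨
      (vmap i ((fs i).ends e').1 = vs (j + 1) ∧ vmap i ((fs i).ends e').2 = vs j) := by
    intro j hj
    obtain ⟨e, he⟩ := hadj j hj
    obtain ⟨i, e', hdec⟩ := hE e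
    refine ⟨i, e', ?_⟩
    rcases he with he | he <;> rw [hdec] at he <;> rw [Prod.ext_iff] at he
    · exact Or.inl ⟨he.1, he.2⟩
    · exact Or.inr ⟨he.1, he.2⟩
  have hcov : ∀ j ≤ n, ∃ i x, vs j = vmap i x := by
    intro j hj
    rcases Nat.eq_zero_or_pos j with rfl | hjpos
    · obtain ⟨i, b, h⟩ := h0; exact ⟨i, _, h⟩
    · have hj' : j - 1 < n := by omega
      obtain ⟨i, e', h⟩ := hadj' (j - 1) hj'
      have hjj : j - 1 + 1 = j := by omega
      rw [hjj] at h
      rcases h with ⟨h1, h2⟩ | ⟨h1, h2⟩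
      · exact ⟨i, _, h2.symm⟩
      · exact ⟨i, _, h1.symm⟩
  set IsB : ℕ → Prop := fun j => ∃ i b, vs j = vmap i (Sum.inr b) with hIsBdef
  have hinner : ∀ j ≤ n, ¬ IsB j → ∃ i w, vs j = vmap i (Sum.inl w) := by
    intro j hj hB
    obtain ⟨i, x, hx⟩ := hcov j hj
    rcases x with w | b
    · exact ⟨i, w, hx⟩
    · exact absurd ⟨i, b, hx⟩ hB
  -- segment lemma
  have hseg : ∀ p q, p < q → q ≤ n → IsB p → IsB q →
      (∀ r, p < r → r < q → ¬ IsB r) → q - p ≤ M := by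
    intro p q hpq hq hBp hBq hmid
    obtain ⟨i₀, e₀, h₀⟩ := hadj' p (lt_of_lt_of_le hpq hq)
    have hchain : ∀ m, p + m < q → ∃ e' : (fs i₀).Leaves,
        (vmap i₀ ((fs i₀).ends e').1 = vs (p + m) ∧
          vmap i₀ ((fs i₀).ends e').2 = vs (p + m + 1)) ∨
        (vmap i₀ ((fs i₀).ends e').1 = vs (p + m + 1) ∧
          vmap i₀ ((fs i₀).ends e').2 = vs (p + m)) := by
      intro m
      induction m with
      | zero => intro _; exact ⟨e₀, h₀⟩
      | succ m ihm =>
        intro hlt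
        have hm : p + m < q := by omega
        obtain ⟨e', he'⟩ := ihm hm
        have hmidB : ¬ IsB (p + m + 1) := hmid _ (by omega) (by omega)
        obtain ⟨i₁, w₁, hw₁⟩ := hinner (p + m + 1) (by omega) hmidB
        have hx : ∃ x, vs (p + m + 1) = vmap i₀ x := by
          rcases he' with ⟨h1, h2⟩ | ⟨h1, h2⟩
          exacts [⟨_, h2.symm⟩, ⟨_, h1.symm⟩]
        obtain ⟨x, hx⟩ := hx
        have h1 := hsep i₀ x i₁ w₁ (hw₁.symm.trans hx)
        obtain ⟨i₂, e₂, he₂⟩ := hadj' (p + m + 1) (by omega)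
        have hy : ∃ y, vs (p + m + 1) = vmap i₂ y := by
          rcases he₂ with ⟨ha, hb⟩ | ⟨ha, hb⟩
          exacts [⟨_, ha.symm⟩, ⟨_, hb.symm⟩]
        obtain ⟨y, hy⟩ := hy
        have h2 := hsep i₂ y i₁ w₁ (hw₁.symm.trans hy)
        have hii : i₂ = i₀ := h2.1.trans h1.1.symm
        subst hii
        exact ⟨e₂, he₂⟩
    have hxex : ∀ r ≤ q - p, ∃ x, vs (p + r) = vmap i₀ x := by
      intro r hr
      rcases Nat.lt_or_ge r (q - p) with h | h
      · obtain ⟨e', he'⟩ := hchain r (by omega)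
        rcases he' with ⟨h1, _⟩ | ⟨_, h2⟩
        exacts [⟨_, h1.symm⟩, ⟨_, h2.symm⟩]
      · have hr' : r = q - p := le_antisymm hr h
        subst hr'
        obtain ⟨e', he'⟩ := hchain (q - p - 1) (by omega)
        have h2 : p + (q - p - 1) + 1 = q := by omega
        have h3 : p + (q - p) = q := by omega
        rw [h2] at he'
        rw [h3]
        rcases he' with ⟨_, hb⟩ | ⟨ha, _⟩
        exacts [⟨_, hb.symm⟩, ⟨_, ha.symm⟩]
    set X : ℕ → (fs i₀).Vert :=
      fun r => if h : r ≤ q - p then (hxex r h).choose else Sum.inr true with hXdef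
    have hX : ∀ r ≤ q - p, vs (p + r) = vmap i₀ (X r) := by
      intro r hr
      simp only [hXdef, dif_pos hr]
      exact (hxex r hr).choose_spec
    have hXinj : Set.InjOn X (Set.Iic (q - p)) := by
      intro a ha b hb hab
      have ha' := Set.mem_Iic.mp ha
      have hb' := Set.mem_Iic.mp hb
      have h1 : vs (p + a) = vs (p + b) := by rw [hX a ha', hX b hb', hab]
      have := hvs (Set.mem_Iic.mpr (by omega : p + a ≤ n))
        (Set.mem_Iic.mpr (by omega : p + b ≤ n)) h1
      omega
    have hXB : ∀ r ≤ q - p, IsB (p + r) → ∃ b, X r = Sum.inr b := by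
      intro r hr hBr
      obtain ⟨i, b, hb⟩ := hBr
      rcases hXv : X r with w | b'
      · exfalso
        have h1 : vmap i₀ (Sum.inl w) = vmap i (Sum.inr b) := by
          rw [← hXv, ← hX r hr]; exact hb
        obtain ⟨_, w0, hw0⟩ := hsep i (Sum.inr b) i₀ w h1
        simp at hw0
      · exact ⟨b', rfl⟩
    obtain ⟨b0, hb0⟩ := hXB 0 (Nat.zero_le _) hBp
    have hqp : p + (q - p) = q := by omega
    obtain ⟨b1, hb1⟩ := hXB (q - p) le_rfl (by rw [hqp]; exact hBq)
    have hne : b0 ≠ b1 := by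
      intro h
      subst h
      have h1 : X 0 = X (q - p) := by rw [hb0, hb1]
      have := hXinj (Set.mem_Iic.mpr (by omega)) (Set.mem_Iic.mpr le_rfl) h1
      omega
    have hdir : (X 0 = Sum.inr true ∧ X (q - p) = Sum.inr false) ∨
        (X 0 = Sum.inr false ∧ X (q - p) = Sum.inr true) := by
      rcases b0 with _ | _ <;> rcases b1 with _ | _
      · exact absurd rfl hne
      · exact Or.inr ⟨hb0, hb1⟩
      · exact Or.inl ⟨hb0, hb1⟩
      · exact absurd rfl hne
    have hXadj : ∀ j < q - p, ∃ e, (fs i₀).ends e = (X j, X (j + 1)) ∨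
        (fs i₀).ends e = (X (j + 1), X j) := by
      intro j hj
      obtain ⟨e', he'⟩ := hchain j (by omega)
      refine ⟨e', ?_⟩
      have h1 := hX j (by omega)
      have h2 := hX (j + 1) (by omega)
      rcases he' with ⟨ha, hb⟩ | ⟨ha, hb⟩
      · left
        rw [Prod.ext_iff]
        exact ⟨hvinj i₀ (ha.trans h1), hvinj i₀ (hb.trans h2)⟩
      · right
        rw [Prod.ext_iff]
        exact ⟨hvinj i₀ (ha.trans h2), hvinj i₀ (hb.trans h1)⟩
    exact le_trans (IH i₀ (q - p) X hXinj hdir hXadj) (hM i₀)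
  -- counting
  rcases Nat.eq_zero_or_pos n with rfl | hnpos
  · exact Nat.zero_le _
  have hB0 : IsB 0 := h0
  have hBn : IsB n := hn
  set S : Finset ℕ := (Finset.range (n + 1)).filter IsB with hSdef
  have hmemS : ∀ j, j ∈ S ↔ j ≤ n ∧ IsB j := by
    intro j
    simp [hSdef, Finset.mem_filter, Finset.mem_range, Nat.lt_succ_iff, and_comm]
  have hScard : S.card ≤ K := by
    have himg : (S.image vs).card = S.card := by
      apply Finset.card_image_of_injOn
      intro a ha b hb hab
      exact hvs (Set.mem_Iic.mpr ((hmemS a).mp ha).1)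
        (Set.mem_Iic.mpr ((hmemS b).mp hb).1) hab
    rw [← himg]
    apply hcard
    intro x hx
    obtain ⟨j, hj, rfl⟩ := Finset.mem_image.mp hx
    exact ((hmemS j).mp hj).2
  have hstep : ∀ j, j ∈ S → j ≤ ((S.filter (· ≤ j)).card - 1) * M := by
    intro j
    induction j using Nat.strong_induction_on with
    | _ j ihj =>
      intro hjS
      rcases Nat.eq_zero_or_pos j with rfl | hjpos
      · exact Nat.zero_le _
      have hP : (S.filter (· < j)).Nonempty :=
        ⟨0, Finset.mem_filter.mpr ⟨(hmemS 0).mpr ⟨Nat.zero_le n, hB0⟩, hjpos⟩⟩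
      set p := (S.filter (· < j)).max' hP with hpdef
      have hpmem := (S.filter (· < j)).max'_mem hP
      rw [Finset.mem_filter] at hpmem
      obtain ⟨hpS, hpj⟩ := hpmem
      have hpmax : ∀ r ∈ S, r < j → r ≤ p := by
        intro r hr hrj
        have hmem : r ∈ S.filter (· < j) := Finset.mem_filter.mpr ⟨hr, hrj⟩
        exact Finset.le_max' _ r hmem
      have hjn : j ≤ n := ((hmemS j).mp hjS).1
      have hmid : ∀ r, p < r → r < j → ¬ IsB r := by
        intro r h1 h2 hBr
        have hrS : r ∈ S := (hmemS r).mpr ⟨by omega, hBr⟩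
        have := hpmax r hrS h2
        omega
      have hseg' := hseg p j hpj hjn ((hmemS p).mp hpS).2 ((hmemS j).mp hjS).2 hmid
      have hcardeq : (S.filter (· ≤ j)).card = (S.filter (· ≤ p)).card + 1 := by
        have hins : S.filter (· ≤ j) = insert j (S.filter (· ≤ p)) := by
          ext r
          simp only [Finset.mem_insert, Finset.mem_filter]
          constructor
          · rintro ⟨hrS, hrj⟩
            rcases eq_or_lt_of_le hrj with rfl | h
            · exact Or.inl rfl
            · exact Or.inr ⟨hrS, hpmax r hrS h⟩
          · rintro (rfl | ⟨hrS, hrp⟩)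
            · exact ⟨hjS, le_refl r⟩
            · exact ⟨hrS, by omega⟩
        rw [hins, Finset.card_insert_of_notMem]
        simp only [Finset.mem_filter]
        rintro ⟨_, h⟩
        omega
      have hih := ihj p hpj hpS
      have hc1 : 1 ≤ (S.filter (· ≤ p)).card :=
        Finset.card_pos.mpr ⟨p, Finset.mem_filter.mpr ⟨hpS, le_refl p⟩⟩
      obtain ⟨c, hc⟩ := Nat.exists_eq_add_of_le hc1
      calc j = p + (j - p) := by omega
        _ ≤ ((S.filter (· ≤ p)).card - 1) * M + M := Nat.add_le_add hih hseg'
        _ = ((S.filter (· ≤ j)).card - 1) * M := by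
            rw [hcardeq, hc]
            simp only [Nat.add_sub_cancel_left, Nat.add_sub_cancel]
            ring
  have hfin := hstep n ((hmemS n).mpr ⟨le_refl n, hBn⟩)
  have hfil : S.filter (· ≤ n) = S := by
    apply Finset.filter_true_of_mem
    intro r hr
    exact ((hmemS r).mp hr).1
  rw [hfil] at hfin
  exact le_trans hfin (Nat.mul_le_mul_right M (by omega))

lemma card_and_bnd (k : ℕ) (fs : Fin (k + 1) → Formula N)
    (T : Finset (Formula.and k fs).Vert)
    (hT : ∀ x ∈ T, ∃ i b, x = vmapAnd k fs i (Sum.inr b)) : T.card ≤ k + 2 := by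
  classical
  have hforms : ∀ x ∈ T, x = Sum.inr true ∨ x = Sum.inr false ∨
      ∃ j : Fin k, x = Sum.inl (Sum.inr j) := by
    intro x hx
    obtain ⟨i, b, rfl⟩ := hT x hx
    rcases b with _ | _ <;> simp only [vmapAnd] <;> split_ifs <;>
      first
        | exact Or.inl rfl
        | exact Or.inr (Or.inl rfl)
        | exact Or.inr (Or.inr ⟨_, rfl⟩)
  have hsub : T ⊆ insert (Sum.inr true) (insert (Sum.inr false)
      ((Finset.univ : Finset (Fin k)).image (fun j => Sum.inl (Sum.inr j)))) := by
    intro x hx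
    rcases hforms x hx with h | h | ⟨j, h⟩
    · simp [h]
    · simp [h]
    · simp only [Finset.mem_insert, Finset.mem_image, Finset.mem_univ, true_and]
      exact Or.inr (Or.inr ⟨j, h.symm⟩)
  calc T.card ≤ _ := Finset.card_le_card hsub
    _ ≤ (insert (Sum.inr false) ((Finset.univ : Finset (Fin k)).image
          (fun j => Sum.inl (Sum.inr j)))).card + 1 := Finset.card_insert_le _ _
    _ ≤ ((Finset.univ : Finset (Fin k)).image
          (fun j => Sum.inl (Sum.inr j))).card + 1 + 1 :=
        Nat.add_le_add_right (Finset.card_insert_le _ _) 1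
    _ ≤ k + 1 + 1 := by
        have := Finset.card_image_le (s := (Finset.univ : Finset (Fin k)))
          (f := fun j => (Sum.inl (Sum.inr j) : (Formula.and k fs).Vert))
        simp only [Finset.card_univ, Fintype.card_fin] at this
        exact Nat.add_le_add_right (Nat.add_le_add_right (le_trans Finset.card_image_le (by simp)) 1) 1
    _ = k + 2 := by omega

lemma card_or_bnd (k : ℕ) (fs : Fin (k + 1) → Formula N)
    (T : Finset (Formula.or k fs).Vert)
    (hT : ∀ x ∈ T, ∃ i b, x = vmapOr k fs i (Sum.inr b)) : T.card ≤ 2 := by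
  classical
  have hsub : T ⊆ {Sum.inr true, Sum.inr false} := by
    intro x hx
    obtain ⟨i, b, rfl⟩ := hT x hx
    rcases b with _ | _ <;> simp [vmapOr]
  calc T.card ≤ _ := Finset.card_le_card hsub
    _ ≤ 2 := le_trans (Finset.card_insert_le _ _) (by simp)

lemma main_nat (l : ℕ) : ∀ (φ : Formula N), FanInLe l φ →
    ∀ (n : ℕ) (vs : ℕ → φ.Vert), Set.InjOn vs (Set.Iic n) →
      ((vs 0 = Sum.inr true ∧ vs n = Sum.inr false) ∨
       (vs 0 = Sum.inr false ∧ vs n = Sum.inr true)) →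
      (∀ j < n, ∃ e, φ.ends e = (vs j, vs (j + 1)) ∨ φ.ends e = (vs (j + 1), vs j)) →
      n ≤ l ^ φ.andDepth := by
  intro φ
  induction φ with
  | var v =>
    intro _ n vs hinj hst hadj
    simp only [andDepth, pow_zero]
    by_contra hcon
    have h2 : 2 ≤ n := by omega
    rcases hv1 : vs 1 with w | b
    · exact w.elim
    · rcases hst with ⟨ha, hb⟩ | ⟨ha, hb⟩ <;> rcases b with _ | _ <;>
        first
          | (have := hinj (Set.mem_Iic.mpr (by omega : (1:ℕ) ≤ n))
              (Set.mem_Iic.mpr (Nat.zero_le n)) (hv1.trans ha.symm); omega)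
          | (have := hinj (Set.mem_Iic.mpr (by omega : (1:ℕ) ≤ n))
              (Set.mem_Iic.mpr (le_refl n)) (hv1.trans hb.symm); omega)
  | and k fs ih =>
    intro hl n vs hinj hst hadj
    obtain ⟨hkl, hfl⟩ := hl
    have hl1 : 1 ≤ l := by omega
    set d := Finset.univ.sup fun i => (fs i).andDepth with hd
    have hm := master (φ := Formula.and k fs) (vmapAnd k fs)
      (vmapAnd_injective k fs) (vmapAnd_sep k fs)
      (fun e => match e with | ⟨i, e'⟩ => ⟨i, e', rfl⟩)
      (k + 2) (l ^ d)
      (fun i => Nat.pow_le_pow_right hl1 (Finset.le_sup (f := fun i => (fs i).andDepth) (Finset.mem_univ i)))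
      (card_and_bnd k fs)
      (fun i => ih i (hfl i))
      n vs hinj
      ?_ ?_ hadj
    · calc n ≤ (k + 2 - 1) * l ^ d := hm
        _ = (k + 1) * l ^ d := by norm_num
        _ ≤ l * l ^ d := Nat.mul_le_mul_right _ hkl
        _ = l ^ (d + 1) := by rw [pow_succ]; ring
        _ = l ^ (Formula.and k fs).andDepth := by rw [show (Formula.and k fs).andDepth = d + 1 from rfl]
    · rcases hst with ⟨ha, _⟩ | ⟨ha, _⟩
      · exact ⟨0, true, by rw [ha]; simp [vmapAnd]⟩
      · exact ⟨Fin.last k, false, by rw [ha]; simp [vmapAnd, Fin.last]⟩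
    · rcases hst with ⟨_, hb⟩ | ⟨_, hb⟩
      · exact ⟨Fin.last k, false, by rw [hb]; simp [vmapAnd, Fin.last]⟩
      · exact ⟨0, true, by rw [hb]; simp [vmapAnd]⟩
  | or k fs ih =>
    intro hl n vs hinj hst hadj
    obtain ⟨hkl, hfl⟩ := hl
    have hl1 : 1 ≤ l := by omega
    set d := Finset.univ.sup fun i => (fs i).andDepth with hd
    have hm := master (φ := Formula.or k fs) (vmapOr k fs)
      (vmapOr_injective k fs) (vmapOr_sep k fs)
      (fun e => match e with | ⟨i, e'⟩ => ⟨i, e', rfl⟩)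
      2 (l ^ d)
      (fun i => Nat.pow_le_pow_right hl1 (Finset.le_sup (f := fun i => (fs i).andDepth) (Finset.mem_univ i)))
      (card_or_bnd k fs)
      (fun i => ih i (hfl i))
      n vs hinj
      ?_ ?_ hadj
    · calc n ≤ (2 - 1) * l ^ d := hm
        _ = l ^ d := by norm_num
        _ = l ^ (Formula.or k fs).andDepth := by rw [show (Formula.or k fs).andDepth = d from rfl]
    · rcases hst with ⟨ha, _⟩ | ⟨ha, _⟩
      · exact ⟨0, true, by rw [ha]; rfl⟩
      · exact ⟨0, false, by rw [ha]; rfl⟩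
    · rcases hst with ⟨_, hb⟩ | ⟨_, hb⟩
      · exact ⟨0, false, by rw [hb]; rfl⟩
      · exact ⟨0, true, by rw [hb]; rfl⟩

end Formula
end STConn


open STConn Formula in
/-- Every self-avoiding path connecting the terminals `s` and `t` in the
series-parallel graph `G_φ` of an AND-OR formula `φ` with fan-in at most `l`
and `∧`-depth `d_∧` has length at most `l^{d_∧}`. -/
theorem stmt_17 {N : ℕ} (φ : Formula N) (l : ℕ) (hl : FanInLe l φ)
    (n : ℕ) (vs : Fin (n + 1) → φ.Vert) (hinj : Function.Injective vs)
    (h0 : vs 0 = φ.src) (hn : vs (Fin.last n) = φ.snk)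
    (hadj : ∀ i : Fin n, ∃ e : φ.Leaves,
      φ.ends e = (vs i.castSucc, vs i.succ) ∨ φ.ends e = (vs i.succ, vs i.castSucc)) :
    n ≤ l ^ φ.andDepth := by
  have hsrc : φ.src = Sum.inr true := rfl
  have hsnk : φ.snk = Sum.inr false := rfl
  let vs' : ℕ → φ.Vert := fun m => vs ⟨min m n, Nat.lt_succ_of_le (min_le_right m n)⟩
  have hval : ∀ (m : ℕ) (hm : m ≤ n), vs' m = vs ⟨m, Nat.lt_succ_of_le hm⟩ := by
    intro m hm
    show vs _ = vs _
    congr 1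
    exact Fin.ext (min_eq_left hm)
  have hinj' : Set.InjOn vs' (Set.Iic n) := by
    intro a ha b hb hab
    rw [hval a (Set.mem_Iic.mp ha), hval b (Set.mem_Iic.mp hb)] at hab
    have := hinj hab
    have := congrArg Fin.val this
    simpa using this
  have h0' : vs' 0 = Sum.inr true := by
    rw [hval 0 (Nat.zero_le n), show (⟨0, by omega⟩ : Fin (n+1)) = 0 from rfl, h0, hsrc]
  have hn' : vs' n = Sum.inr false := by
    rw [hval n le_rfl, show (⟨n, by omega⟩ : Fin (n+1)) = Fin.last n from rfl, hn, hsnk]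
  have hadj' : ∀ j < n, ∃ e, φ.ends e = (vs' j, vs' (j + 1)) ∨
      φ.ends e = (vs' (j + 1), vs' j) := by
    intro j hj
    obtain ⟨e, he⟩ := hadj ⟨j, hj⟩
    have e1 : vs' j = vs (⟨j, hj⟩ : Fin n).castSucc := by
      rw [hval j (by omega)]; rfl
    have e2 : vs' (j + 1) = vs (⟨j, hj⟩ : Fin n).succ := by
      rw [hval (j + 1) (by omega)]; rfl
    rw [e1, e2]
    exact ⟨e, he⟩
  exact main_nat l φ hl n vs' hinj' (Or.inl ⟨h0', hn'⟩) hadj'
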